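/- If G is a finite simple graph with no full vertices (no vertex adjacent to all other vertices), then GC(G) ≥ PRC(G). -/
import Mathlib


open SimpleGraph Finset

variable {V : Type*} [Fintype V] [DecidableEq V]

/-- `S` is a dominating set of the graph `G`. -/
def IsDomSet (G : SimpleGraph V) (S : Finset V) : Prop :=
  ∀ v : V, v ∈ S ∨ ∃ u ∈ S, G.Adj u v

/-- `S` is a global dominating set of `G`: it dominates both `G` and its complement. -/
def IsGlobalDomSet (G : SimpleGraph V) (S : Finset V) : Prop :=
  IsDomSet G S ∧ IsDomSet Gᶜ S

/-- Disjoint sets `A` and `B` form a global coalition in `G`. -/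
def IsGlobalCoalition (G : SimpleGraph V) (A B : Finset V) : Prop :=
  Disjoint A B ∧ ¬ IsGlobalDomSet G A ∧ ¬ IsGlobalDomSet G B ∧ IsGlobalDomSet G (A ∪ B)

/-- `π` is a global coalition partition (gc-partition) of `G`. -/
def IsGCPartition (G : SimpleGraph V) (π : Finpartition (Finset.univ : Finset V)) : Prop :=
  ∀ A ∈ π.parts, ¬ IsGlobalDomSet G A ∧ ∃ B ∈ π.parts, B ≠ A ∧ IsGlobalCoalition G A B

/-- The global coalition number `GC(G)`: the maximum number of parts in a gc-partition of `G`. -/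
noncomputable def globalCoalitionNumber (G : SimpleGraph V) : ℕ :=
  sSup {n | ∃ π : Finpartition (Finset.univ : Finset V), IsGCPartition G π ∧ π.parts.card = n}

/-- `S` is a perfect dominating set of `G`: every vertex not in `S` has exactly one neighbor
in `S`. -/
def IsPerfectDomSet (G : SimpleGraph V) (S : Finset V) : Prop :=
  ∀ v ∉ S, ∃! u, u ∈ S ∧ G.Adj u v

/-- Disjoint sets `A` and `B` form a perfect coalition in `G`. -/
def IsPerfectCoalition (G : SimpleGraph V) (A B : Finset V) : Prop :=
  Disjoint A B ∧ ¬ IsDomSet G A ∧ ¬ IsDomSet G B ∧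
  (∀ v ∉ A, ∀ u₁ ∈ A, ∀ u₂ ∈ A, G.Adj u₁ v → G.Adj u₂ v → u₁ = u₂) ∧
  (∀ v ∉ B, ∀ u₁ ∈ B, ∀ u₂ ∈ B, G.Adj u₁ v → G.Adj u₂ v → u₁ = u₂) ∧
  IsPerfectDomSet G (A ∪ B)

/-- `π` is a perfect coalition partition (prc-partition) of `G`. -/
def IsPrcPartition (G : SimpleGraph V) (π : Finpartition (Finset.univ : Finset V)) : Prop :=
  ∀ A ∈ π.parts, (∃ v : V, A = {v} ∧ IsDomSet G A) ∨
    ∃ B ∈ π.parts, B ≠ A ∧ IsPerfectCoalition G A B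

/-- The perfect coalition number `PRC(G)`. -/
noncomputable def perfectCoalitionNumber (G : SimpleGraph V) : ℕ :=
  sSup {n | ∃ π : Finpartition (Finset.univ : Finset V), IsPrcPartition G π ∧ π.parts.card = n}

lemma prc_to_gc (G : SimpleGraph V) (hfull : ∀ v : V, ∃ u : V, u ≠ v ∧ ¬ G.Adj v u)
    (π : Finpartition (Finset.univ : Finset V)) (hπ : IsPrcPartition G π) :
    IsGCPartition G π := by
  intro A hA
  rcases hπ A hA with ⟨v, hAv, hdom⟩ | ⟨B, hB, hBA, disj, hnA, hnB, hA1, hB1, hperf⟩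
  · -- singleton dominating set contradicts no full vertex
    exfalso
    obtain ⟨u, huv, hadj⟩ := hfull v
    rcases hdom u with hu | ⟨w, hw, hwu⟩
    · exact huv (by simpa [hAv] using hu)
    · rw [hAv, Finset.mem_singleton] at hw
      exact hadj (hw ▸ hwu)
  · have hAne : A.Nonempty := π.nonempty_of_mem_parts hA
    have hBne : B.Nonempty := π.nonempty_of_mem_parts hB
    have hglob : IsGlobalDomSet G (A ∪ B) := by
      constructor
      · intro v
        by_cases hv : v ∈ A ∪ B
        · exact Or.inl hv
        · obtain ⟨u, ⟨hu, hadj⟩, -⟩ := hperf v hv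
          exact Or.inr ⟨u, hu, hadj⟩
      · intro v
        by_cases hv : v ∈ A ∪ B
        · exact Or.inl hv
        · right
          obtain ⟨w, ⟨hw, hwadj⟩, huniq⟩ := hperf v hv
          obtain ⟨a, ha⟩ := hAne
          obtain ⟨b, hb⟩ := hBne
          have haU : a ∈ A ∪ B := Finset.mem_union_left _ ha
          have hbU : b ∈ B ∪ A := Finset.mem_union_left _ hb
          have hbU' : b ∈ A ∪ B := by
            rw [Finset.union_comm]; exact hbU
          have hab : a ≠ b := fun h => by
            exact (Finset.disjoint_left.mp disj ha) (h ▸ hb)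
          by_cases hadja : G.Adj a v
          · refine ⟨b, hbU', ?_⟩
            rw [SimpleGraph.compl_adj]
            have hbv : b ≠ v := fun h => hv (h ▸ hbU')
            refine ⟨hbv, fun hadjb => ?_⟩
            exact hab ((huniq a ⟨haU, hadja⟩).trans (huniq b ⟨hbU', hadjb⟩).symm)
          · refine ⟨a, haU, ?_⟩
            rw [SimpleGraph.compl_adj]
            exact ⟨fun h => hv (h ▸ haU), hadja⟩
    refine ⟨fun h => hnA h.1, B, hB, hBA, disj, fun h => hnA h.1, fun h => hnB h.1, hglob⟩

theorem gc_ge_prc (G : SimpleGraph V) (hfull : ∀ v : V, ∃ u : V, u ≠ v ∧ ¬ G.Adj v u) :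
    perfectCoalitionNumber G ≤ globalCoalitionNumber G := by
  unfold perfectCoalitionNumber globalCoalitionNumber
  set S₁ := {n | ∃ π : Finpartition (Finset.univ : Finset V),
      IsPrcPartition G π ∧ π.parts.card = n}
  set S₂ := {n | ∃ π : Finpartition (Finset.univ : Finset V),
      IsGCPartition G π ∧ π.parts.card = n}
  have hsub : S₁ ⊆ S₂ := by
    rintro n ⟨π, hπ, rfl⟩
    exact ⟨π, prc_to_gc G hfull π hπ, rfl⟩
  rcases Set.eq_empty_or_nonempty S₁ with h | h
  · simp [h]
  · refine csSup_le_csSup ?_ h hsub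
    refine ⟨Fintype.card V, ?_⟩
    rintro n ⟨π, -, rfl⟩
    simpa using π.card_parts_le_card
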